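/- arXiv:2407.08868 — 3 statements merged into one kernel-verified Lean document; each statement's English description precedes it below -/
import Mathlib

section
/- Let D ⊂ ℝ^{d+1} be a bounded domain with regularity R_D := inf over (x,r) with x ∈ D, r > 0 of |B(x,r) ∩ D| / min{|D|, π^{(d+1)/2} r^{d+1} / Γ((d+1)/2 + 1)} > 0, where |·| denotes Lebesgue measure. Let q be an l₀-Lipschitz continuous function on the closure of D. Then sup_D |q| ≤ max{ 2‖q‖_{L¹(D̄)} / (R_D |D|), 2 l₀ · ( ‖q‖_{L¹(D̄)} · Γ((d+1)/2+1) / (l₀ R_D π^{(d+1)/2}) )^{1/(d+2)} }. -/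
open MeasureTheory Metric Set

set_option maxHeartbeats 1000000 in
/-- Lipschitz-bound lemma: sup bound from the L¹ norm for a Lipschitz function on a
bounded domain with positive regularity. -/
theorem stmt_0 {d : ℕ} (D : Set (EuclideanSpace ℝ (Fin (d + 1))))
    (hD : Bornology.IsBounded D) (hDopen : IsOpen D) (hDne : D.Nonempty)
    (l₀ : ℝ) (hl₀ : 0 ≤ l₀)
    (q : EuclideanSpace ℝ (Fin (d + 1)) → ℝ)
    (hq : LipschitzOnWith (Real.toNNReal l₀) q (closure D))
    (RD : ℝ)
    (hRD : RD = ⨅ p : D × {r : ℝ // 0 < r},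
      (volume (closedBall (p.1 : EuclideanSpace ℝ (Fin (d + 1))) (p.2 : ℝ) ∩ D)).toReal /
        min (volume D).toReal
          (Real.pi ^ ((d + 1 : ℝ) / 2) * (p.2 : ℝ) ^ (d + 1) /
            Real.Gamma ((d + 1 : ℝ) / 2 + 1)))
    (hRDpos : 0 < RD) :
    ∀ x ∈ D, |q x| ≤
      max (2 * (∫ y in closure D, |q y|) / (RD * (volume D).toReal))
        (2 * l₀ *
          ((∫ y in closure D, |q y|) * Real.Gamma ((d + 1 : ℝ) / 2 + 1) /
              (l₀ * RD * Real.pi ^ ((d + 1 : ℝ) / 2))) ^ ((1 : ℝ) / (d + 2))) := by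
  intro x hx
  have : Nonempty D := hDne.to_subtype
  haveI : Nonempty {r : ℝ // 0 < r} := ⟨⟨1, one_pos⟩⟩
  set M := |q x| with hMdef
  set I := ∫ y in closure D, |q y| with hIdef
  set G := Real.Gamma ((d + 1 : ℝ) / 2 + 1) with hGdef
  set P := Real.pi ^ ((d + 1 : ℝ) / 2) with hPdef
  have hxcl : x ∈ closure D := subset_closure hx
  have hMnn : 0 ≤ M := abs_nonneg _
  have hcomp : IsCompact (closure D) := hD.isCompact_closure
  have hcont : ContinuousOn (fun y => |q y|) (closure D) := hq.continuousOn.abs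
  have hInt : IntegrableOn (fun y => |q y|) (closure D) volume :=
    hcont.integrableOn_compact hcomp
  have hI0 : 0 ≤ I := integral_nonneg fun y => abs_nonneg _
  have hvolD : 0 < (volume D).toReal :=
    ENNReal.toReal_pos (hDopen.measure_pos volume hDne).ne' hD.measure_lt_top.ne
  have hG : 0 < G := Real.Gamma_pos_of_pos (by positivity)
  have hP : 0 < P := Real.rpow_pos_of_pos Real.pi_pos _
  -- key estimate
  have key : ∀ r : ℝ, 0 < r → l₀ * r ≤ M / 2 →
      M / 2 * (RD * min (volume D).toReal (P * r ^ (d + 1) / G)) ≤ I := by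
    intro r hr hlr
    set m := min (volume D).toReal (P * r ^ (d + 1) / G) with hmdef
    have hm : 0 < m := lt_min hvolD (by positivity)
    set A := (volume (closedBall x r ∩ D)).toReal with hAdef
    have hA : RD * m ≤ A := by
      have h1 : RD ≤ A / m := by
        rw [hRD, hAdef, hmdef, hGdef, hPdef]
        refine (ciInf_le ⟨0, ?_⟩ ⟨⟨x, hx⟩, ⟨r, hr⟩⟩).trans_eq (by norm_num)
        rintro z ⟨p, rfl⟩
        exact div_nonneg ENNReal.toReal_nonneg
          (le_min ENNReal.toReal_nonneg (div_nonneg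
            (mul_nonneg (Real.rpow_pos_of_pos Real.pi_pos _).le (pow_nonneg p.2.2.le _))
            (Real.Gamma_pos_of_pos (by positivity)).le))
      exact (le_div_iff₀ hm).mp h1
    have hS : MeasurableSet (closedBall x r ∩ D) :=
      measurableSet_closedBall.inter hDopen.measurableSet
    have hSsub : closedBall x r ∩ D ⊆ closure D := fun y hy => subset_closure hy.2
    have hSfin : volume (closedBall x r ∩ D) ≠ ⊤ :=
      ((measure_mono inter_subset_left).trans_lt measure_closedBall_lt_top).ne
    have hlow : ∀ y ∈ closedBall x r ∩ D, M / 2 ≤ |q y| := by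
      intro y hy
      have hycl : y ∈ closure D := subset_closure hy.2
      have hdq : dist (q x) (q y) ≤ l₀ * r := by
        have h1 := (lipschitzOnWith_iff_dist_le_mul.mp hq) x hxcl y hycl
        have h2 : dist x y ≤ r := by
          rw [dist_comm]; exact mem_closedBall.mp hy.1
        calc dist (q x) (q y) ≤ (Real.toNNReal l₀ : ℝ) * dist x y := h1
          _ = l₀ * dist x y := by rw [Real.coe_toNNReal l₀ hl₀]
          _ ≤ l₀ * r := mul_le_mul_of_nonneg_left h2 hl₀
      have habs : |q x| - |q y| ≤ |q x - q y| := abs_sub_abs_le_abs_sub _ _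
      have : |q x - q y| ≤ M / 2 := by
        rw [← Real.dist_eq]; linarith
      linarith [hMdef ▸ le_refl M]
    have h1 : M / 2 * A ≤ ∫ y in closedBall x r ∩ D, |q y| :=
      setIntegral_ge_of_const_le_real hS hSfin hlow (hInt.mono_set hSsub)
    have h2 : (∫ y in closedBall x r ∩ D, |q y|) ≤ I :=
      setIntegral_mono_set hInt (Filter.Eventually.of_forall fun y => abs_nonneg _)
        (HasSubset.Subset.eventuallyLE hSsub)
    calc M / 2 * (RD * m) ≤ M / 2 * A :=
          mul_le_mul_of_nonneg_left hA (by linarith)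
      _ ≤ I := h1.trans h2
  rcases eq_or_lt_of_le hMnn with hM0 | hMpos
  · refine le_max_of_le_left ?_
    rw [← hM0]
    exact div_nonneg (by linarith) (by positivity)
  rcases eq_or_lt_of_le hl₀ with hl0 | hlpos
  · -- l₀ = 0 : pick r large so that min = vol D
    set r : ℝ := max 1 ((volume D).toReal * G / P) with hrdef
    have hr1 : (1 : ℝ) ≤ r := le_max_left _ _
    have hr : 0 < r := lt_of_lt_of_le one_pos hr1
    have hrge : (volume D).toReal * G / P ≤ r := le_max_right _ _
    have hminv : (volume D).toReal ≤ P * r ^ (d + 1) / G := by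
      rw [le_div_iff₀ hG]
      have h1 : (volume D).toReal * G ≤ P * r := by
        rw [div_le_iff₀ hP] at hrge; linarith [hrge]
      have h2 : r ≤ r ^ (d + 1) := le_self_pow₀ hr1 (by omega)
      calc (volume D).toReal * G ≤ P * r := h1
        _ ≤ P * r ^ (d + 1) := mul_le_mul_of_nonneg_left h2 hP.le
    have hkey := key r hr (by rw [← hl0]; simpa using (by linarith : (0:ℝ) ≤ M / 2))
    rw [min_eq_left hminv] at hkey
    refine le_max_of_le_left ?_
    rw [le_div_iff₀ (by positivity : 0 < RD * (volume D).toReal)]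
    nlinarith [hkey]
  · -- l₀ > 0
    set r : ℝ := M / (2 * l₀) with hrdef
    have hr : 0 < r := by positivity
    have hlr : l₀ * r = M / 2 := by
      rw [hrdef]; field_simp
    have hkey := key r hr hlr.le
    rcases min_cases (volume D).toReal (P * r ^ (d + 1) / G) with ⟨hmin, _⟩ | ⟨hmin, _⟩
    · rw [hmin] at hkey
      refine le_max_of_le_left ?_
      rw [le_div_iff₀ (by positivity : 0 < RD * (volume D).toReal)]
      nlinarith [hkey]
    · rw [hmin] at hkey
      refine le_max_of_le_right ?_
      set K := I * G / (l₀ * RD * P) with hKdef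
      have hK0 : 0 ≤ K := div_nonneg (mul_nonneg hI0 hG.le) (by positivity)
      have hpow : M ^ (d + 2) ≤ (2 * l₀) ^ (d + 2) * K := by
        have e1 : M ^ (d + 2) =
            (M / 2 * (RD * (P * r ^ (d + 1) / G))) * (2 ^ (d + 2) * l₀ ^ (d + 1) * G / (RD * P)) := by
          rw [hrdef, div_pow, mul_pow]
          field_simp
          ring
        have e2 : (2 * l₀) ^ (d + 2) * K = I * (2 ^ (d + 2) * l₀ ^ (d + 1) * G / (RD * P)) := by
          rw [hKdef]
          field_simp
          ring
        rw [e1, e2]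
        exact mul_le_mul_of_nonneg_right hkey (by positivity)
      have hd2 : ((d : ℝ) + 2) ≠ 0 := by positivity
      have hmono := Real.rpow_le_rpow (by positivity) hpow
        (by positivity : (0:ℝ) ≤ 1 / ((d : ℝ) + 2))
      rw [Real.mul_rpow (by positivity) hK0] at hmono
      have eM : (M ^ (d + 2) : ℝ) ^ ((1 : ℝ) / ((d : ℝ) + 2)) = M := by
        rw [← Real.rpow_natCast M (d + 2), ← Real.rpow_mul hMnn]
        push_cast
        rw [mul_one_div, div_self hd2, Real.rpow_one]
      have eL : ((2 * l₀) ^ (d + 2) : ℝ) ^ ((1 : ℝ) / ((d : ℝ) + 2)) = 2 * l₀ := by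
        rw [← Real.rpow_natCast (2 * l₀) (d + 2), ← Real.rpow_mul (by positivity)]
        push_cast
        rw [mul_one_div, div_self hd2, Real.rpow_one]
      rw [eM, eL] at hmono
      exact hmono
end

section
/- Let D ⊂ ℝ^{d+1} be a bounded domain with positive regularity R_D, and let q : D̄ → ℝ be l₀-Lipschitz with l₀ > 0. If the mean of |q| over D̄ is less than δ (i.e., ‖q‖_{L¹(D̄)} < δ |D|), then sup_D |q| ≤ max{ 2δ/R_D, 2 l₀ ( δ |D| Γ((d+1)/2+1) / (l₀ R_D π^{(d+1)/2}) )^{1/(d+2)} }. In particular, sup_D |q| → 0 as δ → 0. -/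
open MeasureTheory Metric Set

/-- If the mean of |q| over D̄ is less than δ, then the sup of |q| over D is bounded
by an explicit quantity tending to 0 with δ. -/
theorem stmt_1 {d : ℕ} (D : Set (EuclideanSpace ℝ (Fin (d + 1))))
    (hD : Bornology.IsBounded D) (hDopen : IsOpen D) (hDne : D.Nonempty)
    (l₀ : ℝ) (hl₀ : 0 < l₀)
    (q : EuclideanSpace ℝ (Fin (d + 1)) → ℝ)
    (hq : LipschitzOnWith (Real.toNNReal l₀) q (closure D))
    (RD : ℝ)
    (hRD : RD = ⨅ p : D × {r : ℝ // 0 < r},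
      (volume (closedBall (p.1 : EuclideanSpace ℝ (Fin (d + 1))) (p.2 : ℝ) ∩ D)).toReal /
        min (volume D).toReal
          (Real.pi ^ ((d + 1 : ℝ) / 2) * (p.2 : ℝ) ^ (d + 1) /
            Real.Gamma ((d + 1 : ℝ) / 2 + 1)))
    (hRDpos : 0 < RD)
    (δ : ℝ) (hδ : 0 < δ)
    (hmean : (∫ y in closure D, |q y|) < δ * (volume D).toReal) :
    ∀ x ∈ D, |q x| ≤
      max (2 * δ / RD)
        (2 * l₀ *
          (δ * (volume D).toReal * Real.Gamma ((d + 1 : ℝ) / 2 + 1) /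
              (l₀ * RD * Real.pi ^ ((d + 1 : ℝ) / 2))) ^ ((1 : ℝ) / (d + 2))) := by
  intro x hx
  set vD := (volume D).toReal with hvD
  have hvol_fin : volume D < ⊤ := hD.measure_lt_top
  have hvDpos : 0 < vD :=
    ENNReal.toReal_pos (hDopen.measure_pos volume hDne).ne' hvol_fin.ne
  set e : ℝ := ((d : ℝ) + 1) / 2 with he
  have hΓpos : 0 < Real.Gamma (e + 1) := Real.Gamma_pos_of_pos (by positivity)
  have hπpos : 0 < Real.pi ^ e := Real.rpow_pos_of_pos Real.pi_pos e
  -- key measure lower bound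
  have key : ∀ r : ℝ, 0 < r →
      RD * min vD (Real.pi ^ e * r ^ (d + 1) / Real.Gamma (e + 1)) ≤
        (volume (closedBall x r ∩ D)).toReal := by
    intro r hr
    have hmin : 0 < min vD (Real.pi ^ e * r ^ (d + 1) / Real.Gamma (e + 1)) :=
      lt_min hvDpos (by positivity)
    have hbdd : BddBelow (Set.range fun p : D × {r : ℝ // 0 < r} =>
        (volume (closedBall (p.1 : EuclideanSpace ℝ (Fin (d + 1))) (p.2 : ℝ) ∩ D)).toReal /
          min (volume D).toReal
            (Real.pi ^ ((d + 1 : ℝ) / 2) * (p.2 : ℝ) ^ (d + 1) /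
              Real.Gamma ((d + 1 : ℝ) / 2 + 1))) := by
      refine ⟨0, ?_⟩
      rintro y ⟨p, rfl⟩
      have hr2 := p.2.2
      exact div_nonneg ENNReal.toReal_nonneg
        (le_min ENNReal.toReal_nonneg (by positivity))
    have h1 : RD ≤ (volume (closedBall x r ∩ D)).toReal /
        min vD (Real.pi ^ e * r ^ (d + 1) / Real.Gamma (e + 1)) := by
      rw [hRD]
      exact ciInf_le hbdd (⟨⟨x, hx⟩, ⟨r, hr⟩⟩ : D × {r : ℝ // 0 < r})
    calc RD * min vD (Real.pi ^ e * r ^ (d + 1) / Real.Gamma (e + 1))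
        ≤ ((volume (closedBall x r ∩ D)).toReal /
            min vD (Real.pi ^ e * r ^ (d + 1) / Real.Gamma (e + 1))) *
            min vD (Real.pi ^ e * r ^ (d + 1) / Real.Gamma (e + 1)) :=
          mul_le_mul_of_nonneg_right h1 hmin.le
      _ = (volume (closedBall x r ∩ D)).toReal := div_mul_cancel₀ _ hmin.ne'
  -- integrability
  have hcomp : IsCompact (closure D) := hD.isCompact_closure
  have hqc : ContinuousOn (fun y => |q y|) (closure D) := hq.continuousOn.abs
  have hint : IntegrableOn (fun y => |q y|) (closure D) :=
    hqc.integrableOn_compact hcomp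
  set M := |q x| with hM
  by_cases hMle : M ≤ 2 * δ / RD
  · exact le_trans hMle (le_max_left _ _)
  push_neg at hMle
  have hMpos : 0 < M := lt_trans (by positivity) hMle
  set r := M / (2 * l₀) with hr
  have hrpos : 0 < r := by positivity
  set S := closedBall x r ∩ D with hS
  have hsub : S ⊆ closure D := fun y hy => subset_closure hy.2
  have hlow : ∀ y ∈ S, M / 2 ≤ |q y| := by
    intro y hy
    have hyd : dist (q y) (q x) ≤ l₀ * dist y x := by
      have := hq.dist_le_mul y (subset_closure hy.2) x (subset_closure hx)
      rwa [Real.coe_toNNReal l₀ hl₀.le] at this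
    have hdyx : dist y x ≤ r := hy.1
    have h1 : dist (q y) (q x) ≤ M / 2 := by
      calc dist (q y) (q x) ≤ l₀ * dist y x := hyd
        _ ≤ l₀ * r := by nlinarith
        _ = M / 2 := by field_simp [hr]; rw [hr]; field_simp
    have h2 : |q x| - |q y| ≤ |q y - q x| := by
      have := abs_sub_abs_le_abs_sub (q x) (q y)
      rw [abs_sub_comm] at this; linarith
    rw [Real.dist_eq] at h1
    linarith [h2, h1]
  have hSmeas : MeasurableSet S := measurableSet_closedBall.inter hDopen.measurableSet
  have hSfin : volume S ≠ ⊤ :=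
    (lt_of_le_of_lt (measure_mono inter_subset_right) hvol_fin).ne
  have hintS : IntegrableOn (fun y => |q y|) S := hint.mono_set hsub
  have hI1 : M / 2 * (volume S).toReal ≤ ∫ y in S, |q y| :=
    setIntegral_ge_of_const_le_real hSmeas hSfin hlow hintS
  have hI2 : (∫ y in S, |q y|) ≤ ∫ y in closure D, |q y| := by
    refine setIntegral_mono_set hint ?_ (HasSubset.Subset.eventuallyLE hsub)
    filter_upwards with y using abs_nonneg _
  have hmain : M / 2 * (RD * min vD (Real.pi ^ e * r ^ (d + 1) / Real.Gamma (e + 1))) <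
      δ * vD := by
    have hk := key r hrpos
    have : M / 2 * (RD * min vD (Real.pi ^ e * r ^ (d + 1) / Real.Gamma (e + 1))) ≤
        M / 2 * (volume S).toReal :=
      mul_le_mul_of_nonneg_left hk (by positivity)
    linarith [hI1, hI2, hmean]
  rcases min_cases vD (Real.pi ^ e * r ^ (d + 1) / Real.Gamma (e + 1)) with
    ⟨hmeq, _⟩ | ⟨hmeq, _⟩
  · -- min is vD : contradiction with hMle
    exfalso
    rw [hmeq] at hmain
    have h2δ : 2 * δ < M * RD := by
      rw [div_lt_iff₀ hRDpos] at hMle; linarith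
    nlinarith [hmain, hvDpos]
  · -- min is the ball term
    rw [hmeq] at hmain
    set X := δ * vD * Real.Gamma (e + 1) / (l₀ * RD * Real.pi ^ e) with hX
    have hXpos : 0 < X := by positivity
    refine le_trans ?_ (le_max_right _ _)
    set B := 2 * l₀ * X ^ ((1 : ℝ) / ((d : ℝ) + 2)) with hB
    have hBpos : 0 < B := by positivity
    -- show M ^ (d+2) < B ^ (d+2)
    have hBpow : B ^ (d + 2) = (2 * l₀) ^ (d + 2) * X := by
      have hn : ((d + 2 : ℕ) : ℝ) = (d : ℝ) + 2 := by push_cast; ring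
      rw [hB, mul_pow, ← Real.rpow_natCast (X ^ ((1 : ℝ) / ((d : ℝ) + 2))) (d + 2),
        ← Real.rpow_mul hXpos.le, hn, one_div,
        inv_mul_cancel₀ (by positivity : ((d : ℝ) + 2) ≠ 0), Real.rpow_one]
    have hMpow : M ^ (d + 2) < (2 * l₀) ^ (d + 2) * X := by
      have heq : M / 2 * (RD * (Real.pi ^ e * r ^ (d + 1) / Real.Gamma (e + 1))) =
          M ^ (d + 2) * (RD * Real.pi ^ e) /
            (2 * Real.Gamma (e + 1) * (2 * l₀) ^ (d + 1)) := by
        rw [hr, div_pow]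
        field_simp
        ring
      rw [heq] at hmain
      rw [div_lt_iff₀ (by positivity)] at hmain
      rw [hX, ← mul_div_assoc, lt_div_iff₀ (by positivity)]
      calc M ^ (d + 2) * (l₀ * RD * Real.pi ^ e)
          = (M ^ (d + 2) * (RD * Real.pi ^ e)) * l₀ := by ring
        _ < (δ * vD * (2 * Real.Gamma (e + 1) * (2 * l₀) ^ (d + 1))) * l₀ :=
            mul_lt_mul_of_pos_right hmain hl₀
        _ = (2 * l₀) ^ (d + 2) * (δ * vD * Real.Gamma (e + 1)) := by ring
    rw [← hBpow] at hMpow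
    exact (lt_of_pow_lt_pow_left₀ (d + 2) hBpos.le hMpow).le
end

section
/- From mean-value bounds to sup bounds for PINNs: let D ⊂ ℝ^{d+1} be bounded with positive regularity R_D, and Σ ⊂ ∂D a d-dimensional boundary portion with positive regularity R_Σ (with respect to d-dimensional Hausdorff measure). Suppose F, W_F (the PDE residual of F), and u are all (l/2)-Lipschitz on D, E_Y[|F(Y) − ũ(Y)|] < δ₁ for Y uniform on Σ, and E_X[|W_F(X)|] < δ₂ for X uniform on D. Then sup_Σ |F − ũ| ≤ δ̃₁ and sup_D |W_F| ≤ δ̃₂, where δ̃₁ = max{2δ₁/R_Σ, 2l(δ₁|Σ|Γ(d/2+1)/(l R_Σ π^{d/2}))^{1/(d+1)}} and δ̃₂ = max{2δ₂/R_D, 2l(δ₂|D|Γ((d+1)/2+1)/(l R_D π^{(d+1)/2}))^{1/(d+2)}}. -/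
open MeasureTheory Metric Set
open scoped MeasureTheory

lemma key_lemma {E : Type*} [MeasurableSpace E] [MetricSpace E] [BorelSpace E]
    (μ : Measure E) (S T : Set E) (hST : S ⊆ T) (hT : MeasurableSet T)
    (hTb : Bornology.IsBounded T)
    (g : E → ℝ) (l : ℝ) (hl : 0 < l)
    (hg : LipschitzOnWith l.toNNReal g T)
    (y : E) (hy : y ∈ S)
    (K c Γ δ : ℝ) (n : ℕ)
    (hK : 0 < K) (hc : 0 < c) (hΓ : 0 < Γ) (hδ : 0 < δ)
    (hfin : μ S ≠ ⊤) (hpos : 0 < (μ S).toReal)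
    (hreg : ∀ r > (0:ℝ), K * min ((μ S).toReal) (c * r ^ n / Γ) ≤ (μ (closedBall y r ∩ S)).toReal)
    (hmean : (∫ z in S, |g z| ∂μ) < δ * (μ S).toReal) :
    |g y| ≤ max (2 * δ / K)
      (2 * l * (δ * (μ S).toReal * Γ / (l * K * c)) ^ ((1:ℝ)/(n+1))) := by
  set A := (μ S).toReal with hA
  rcases (abs_nonneg (g y)).eq_or_lt with hM | hM
  · exact hM.symm.le.trans (le_max_of_le_left (by positivity))
  set M := |g y| with hMdef
  set r := M / (2 * l) with hr
  have hrpos : 0 < r := by positivity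
  -- global Lipschitz extension
  obtain ⟨G, hGlip, hEq⟩ := hg.extend_real
  have hyT : y ∈ T := hST hy
  have hdist : ∀ z ∈ T, |g z - g y| ≤ l * dist z y := by
    intro z hz
    have := hg.dist_le_mul z hz y hyT
    rwa [Real.dist_eq, Real.coe_toNNReal _ hl.le] at this
  -- restricted measure
  set ν := μ.restrict S with hν
  haveI : IsFiniteMeasure ν := ⟨by
    rw [hν, Measure.restrict_apply_univ]; exact hfin.lt_top⟩
  have hnull : ν Tᶜ = 0 := by
    rw [hν, Measure.restrict_apply hT.compl,
      show Tᶜ ∩ S = ∅ from eq_empty_iff_forall_notMem.2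
        (fun z hz => hz.1 (hST hz.2))]
    simp
  have haeeq : (fun z => |g z|) =ᵐ[ν] fun z => |G z| := by
    refine measure_mono_null ?_ hnull
    intro z hz hzT
    exact hz (by simp [hEq hzT])
  -- boundedness of G on T
  have hGbd : ∀ z ∈ T, ‖G z‖ ≤ M + l * Metric.diam T := by
    intro z hz
    have h1 : |g z - g y| ≤ l * dist z y := hdist z hz
    have h2 : dist z y ≤ Metric.diam T := Metric.dist_le_diam_of_mem hTb hz hyT
    have : |g z| ≤ |g y| + |g z - g y| := by
      have := abs_sub_abs_le_abs_sub (g z) (g y); linarith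
    rw [Real.norm_eq_abs, ← hEq hz]
    nlinarith [mul_le_mul_of_nonneg_left h2 hl.le]
  have hGint : Integrable G ν := by
    refine ⟨hGlip.continuous.aestronglyMeasurable, HasFiniteIntegral.of_bounded
      (C := M + l * Metric.diam T) ?_⟩
    refine measure_mono_null ?_ hnull
    intro z hz hzT
    exact hz (hGbd z hzT)
  -- indicator lower bound
  set B := closedBall y r ∩ T with hB
  have hBmeas : MeasurableSet B := measurableSet_closedBall.inter hT
  have hlow : ∀ z ∈ B, M / 2 ≤ |G z| := by
    intro z hz
    have h1 : |g z - g y| ≤ l * dist z y := hdist z hz.2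
    have h2 : dist z y ≤ r := mem_closedBall.1 hz.1
    have h3 : l * dist z y ≤ l * r := mul_le_mul_of_nonneg_left h2 hl.le
    have h4 : l * r = M / 2 := by rw [hr]; field_simp
    have : |g y| - |g z| ≤ |g z - g y| := by
      have := abs_sub_abs_le_abs_sub (g y) (g z)
      rw [abs_sub_comm] at this; linarith
    rw [← hEq hz.2]
    linarith
  have hpt : ∀ z, B.indicator (fun _ => M / 2) z ≤ |G z| := by
    intro z
    by_cases hz : z ∈ B
    · rw [indicator_of_mem hz]; exact hlow z hz
    · rw [indicator_of_notMem hz]; positivity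
  have hind : Integrable (B.indicator (fun _ => M / 2)) ν :=
    (integrable_const _).indicator hBmeas
  have hintB : ∫ z, B.indicator (fun _ => M / 2) z ∂ν = (ν B).toReal * (M / 2) := by
    rw [integral_indicator_const _ hBmeas, smul_eq_mul]; rfl
  have hνB : ν B = μ (closedBall y r ∩ S) := by
    rw [hν, Measure.restrict_apply hBmeas, hB, inter_assoc,
      inter_eq_self_of_subset_right hST]
  have hchain : (M / 2) * (μ (closedBall y r ∩ S)).toReal < δ * A := by
    have h5 : ∫ z, B.indicator (fun _ => M / 2) z ∂ν ≤ ∫ z, |G z| ∂ν :=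
      integral_mono hind hGint.abs hpt
    have h6 : ∫ z, |G z| ∂ν = ∫ z, |g z| ∂ν := (integral_congr_ae haeeq).symm
    calc (M / 2) * (μ (closedBall y r ∩ S)).toReal
        = (ν B).toReal * (M / 2) := by rw [hνB]; ring
      _ = ∫ z, B.indicator (fun _ => M / 2) z ∂ν := hintB.symm
      _ ≤ ∫ z, |G z| ∂ν := h5
      _ = ∫ z, |g z| ∂ν := h6
      _ < δ * A := hmean
  have hkey : (M / 2) * (K * min A (c * r ^ n / Γ)) < δ * A := by
    have := hreg r hrpos
    nlinarith [this, hchain, mul_le_mul_of_nonneg_left this (by positivity : (0:ℝ) ≤ M / 2)]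
  rcases le_total A (c * r ^ n / Γ) with hmin | hmin
  · rw [min_eq_left hmin] at hkey
    refine le_max_of_le_left ?_
    rw [le_div_iff₀ hK]
    nlinarith
  · rw [min_eq_right hmin] at hkey
    refine le_max_of_le_right ?_
    set X := δ * A * Γ / (l * K * c) with hX
    have hXpos : 0 < X := by positivity
    have h2l : (0:ℝ) < 2 * l := by linarith
    have hY : (2 * l * X ^ ((1:ℝ)/(n+1))) ^ (n+1) = (2*l)^(n+1) * X := by
      rw [mul_pow, ← Real.rpow_natCast (X ^ ((1:ℝ)/(n+1))) (n+1), ← Real.rpow_mul hXpos.le]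
      congr 1
      rw [show ((1:ℝ)/(n+1)) * ((n+1 : ℕ) : ℝ) = 1 by push_cast; field_simp, Real.rpow_one]
    have hMn : M ^ (n+1) < (2*l)^(n+1) * X := by
      have e1 : M ^ (n+1) = (2*(2*l)^n*Γ/(K*c)) *
          ((M/2) * (K * (c * (M^n/(2*l)^n) / Γ))) := by
        field_simp
        ring
      have e2 : (2*(2*l)^n*Γ/(K*c)) * (δ * A) = (2*l)^(n+1) * X := by
        rw [hX, pow_succ]
        field_simp
      have hrn : r ^ n = M ^ n / (2*l)^n := by rw [hr, div_pow]
      rw [hrn] at hkey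
      calc M ^ (n+1) = _ := e1
        _ < (2*(2*l)^n*Γ/(K*c)) * (δ * A) := by
            apply mul_lt_mul_of_pos_left hkey (by positivity)
        _ = (2*l)^(n+1) * X := e2
    have hpow : M ^ (n+1) ≤ (2 * l * X ^ ((1:ℝ)/(n+1))) ^ (n+1) := by
      rw [hY]; exact hMn.le
    exact le_of_pow_le_pow_left₀ (Nat.succ_ne_zero n) (by positivity) hpow


/-- From mean-value bounds under uniform sampling to sup bounds, for the boundary data
mismatch on Σ (with d-dimensional Hausdorff measure) and the PDE residual on D
(with Lebesgue measure), for (l/2)-Lipschitz F, W_F, u, ũ. -/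
theorem stmt_13 {d : ℕ} (D : Set (EuclideanSpace ℝ (Fin (d + 1))))
    (hD : Bornology.IsBounded D) (hDopen : IsOpen D) (hDne : D.Nonempty)
    (Ss : Set (EuclideanSpace ℝ (Fin (d + 1))))
    (hSs : Ss ⊆ frontier D) (hSsne : Ss.Nonempty)
    (l : ℝ) (hl : 0 < l)
    (F WF u ut : EuclideanSpace ℝ (Fin (d + 1)) → ℝ)
    (hF : LipschitzOnWith (Real.toNNReal (l / 2)) F (closure D))
    (hWF : LipschitzOnWith (Real.toNNReal (l / 2)) WF (closure D))
    (hu : LipschitzOnWith (Real.toNNReal (l / 2)) u (closure D))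
    (hut : LipschitzOnWith (Real.toNNReal (l / 2)) ut (closure D))
    (RS RD : ℝ) (hRSpos : 0 < RS) (hRDpos : 0 < RD)
    -- regularity of Σ with respect to d-dimensional Hausdorff measure
    (hRS : ∀ x ∈ Ss, ∀ r > (0 : ℝ),
      RS * min ((μH[(d : ℝ)] Ss).toReal)
          (Real.pi ^ ((d : ℝ) / 2) * r ^ d / Real.Gamma ((d : ℝ) / 2 + 1)) ≤
        (μH[(d : ℝ)] (closedBall x r ∩ Ss)).toReal)
    -- regularity of D with respect to (d+1)-dimensional Lebesgue measure
    (hRD : ∀ x ∈ D, ∀ r > (0 : ℝ),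
      RD * min ((volume D).toReal)
          (Real.pi ^ ((d + 1 : ℝ) / 2) * r ^ (d + 1) /
            Real.Gamma ((d + 1 : ℝ) / 2 + 1)) ≤
        (volume (closedBall x r ∩ D)).toReal)
    (δ₁ δ₂ : ℝ) (hδ₁pos : 0 < δ₁) (hδ₂pos : 0 < δ₂)
    -- E_Y[|F(Y) − ũ(Y)|] < δ₁ for Y uniform on Σ
    (hmean1 : (∫ y in Ss, |F y - ut y| ∂μH[(d : ℝ)]) < δ₁ * (μH[(d : ℝ)] Ss).toReal)
    -- E_X[|W_F(X)|] < δ₂ for X uniform on D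
    (hmean2 : (∫ x in D, |WF x|) < δ₂ * (volume D).toReal) :
    (∀ y ∈ Ss, |F y - ut y| ≤
      max (2 * δ₁ / RS)
        (2 * l * (δ₁ * (μH[(d : ℝ)] Ss).toReal * Real.Gamma ((d : ℝ) / 2 + 1) /
            (l * RS * Real.pi ^ ((d : ℝ) / 2))) ^ ((1 : ℝ) / (d + 1)))) ∧
    (∀ x ∈ D, |WF x| ≤
      max (2 * δ₂ / RD)
        (2 * l * (δ₂ * (volume D).toReal * Real.Gamma ((d + 1 : ℝ) / 2 + 1) /
            (l * RD * Real.pi ^ ((d + 1 : ℝ) / 2))) ^ ((1 : ℝ) / (d + 2)))) := by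
  have hclosMeas : MeasurableSet (closure D) := isClosed_closure.measurableSet
  have hclosBd : Bornology.IsBounded (closure D) := hD.closure
  constructor
  · -- boundary part
    intro y hy
    have hsub : Ss ⊆ closure D := hSs.trans frontier_subset_closure
    have hg : LipschitzOnWith l.toNNReal (fun z => F z - ut z) (closure D) := by
      have h := hF.sub hut
      have hcoe : Real.toNNReal (l / 2) + Real.toNNReal (l / 2) = l.toNNReal := by
        rw [← Real.toNNReal_add (by positivity) (by positivity)]
        norm_num
      rw [hcoe] at h
      exact h
    have h0 : 0 ≤ ∫ z in Ss, |F z - ut z| ∂μH[(d : ℝ)] :=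
      integral_nonneg fun z => abs_nonneg _
    have hApos : 0 < (μH[(d : ℝ)] Ss).toReal := by
      have h1 : 0 < δ₁ * (μH[(d : ℝ)] Ss).toReal := lt_of_le_of_lt h0 hmean1
      by_contra h
      push_neg at h
      nlinarith
    have hfin : μH[(d : ℝ)] Ss ≠ ⊤ := by
      intro h
      rw [h] at hApos
      simp at hApos
    exact key_lemma (μH[(d : ℝ)]) Ss (closure D) hsub hclosMeas hclosBd
      (fun z => F z - ut z) l hl hg y hy RS (Real.pi ^ ((d : ℝ) / 2))
      (Real.Gamma ((d : ℝ) / 2 + 1)) δ₁ d hRSpos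
      (Real.rpow_pos_of_pos Real.pi_pos _)
      (Real.Gamma_pos_of_pos (by positivity)) hδ₁pos hfin hApos
      (hRS y hy) hmean1
  · -- interior part
    intro x hx
    have hsub : D ⊆ closure D := subset_closure
    have hg : LipschitzOnWith l.toNNReal WF (closure D) := fun a ha b hb =>
      le_trans (hWF ha hb)
        (mul_le_mul_left (ENNReal.coe_le_coe.2 (Real.toNNReal_mono (by linarith))) _)
    have h0 : 0 ≤ ∫ z in D, |WF z| := integral_nonneg fun z => abs_nonneg _
    have hApos : 0 < (volume D).toReal := by
      have h1 : 0 < δ₂ * (volume D).toReal := lt_of_le_of_lt h0 hmean2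
      by_contra h
      push_neg at h
      nlinarith
    have hfin : volume D ≠ ⊤ := by
      intro h
      rw [h] at hApos
      simp at hApos
    have key := key_lemma volume D (closure D) hsub hclosMeas hclosBd
      WF l hl hg x hx RD (Real.pi ^ ((d + 1 : ℝ) / 2))
      (Real.Gamma ((d + 1 : ℝ) / 2 + 1)) δ₂ (d + 1) hRDpos
      (Real.rpow_pos_of_pos Real.pi_pos _)
      (Real.Gamma_pos_of_pos (by positivity)) hδ₂pos hfin hApos
      (hRD x hx) hmean2
    have hcast : ((1 : ℝ) / ((d + 1 : ℕ) + 1)) = (1 : ℝ) / (d + 2) := by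
      push_cast
      ring
    rwa [hcast] at key
end
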